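/- Let P be a finitely generated, integral, saturated, torsion-free commutative monoid with trivial unit group P^× = {e}. Then the dual group P^{gp*} = Hom(P^{gp}, ℤ) is generated as a group by the dual monoid P^* = {f ∈ P^{gp*} : f(x) ≥ 0 for all x ∈ P}. -/

import Mathlib

/-- A rational linear system solvable over `ℝ` is solvable over `ℚ`. -/
lemma rat_sol_of_real_sol {k : ℕ} {ι : Type*} [Fintype ι] (v : ι → (Fin k → ℚ))
    (b : Fin k → ℚ) (w : ι → ℝ)
    (hw : ∑ i, w i • (fun j => ((v i j : ℝ))) = fun j => (b j : ℝ)) :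
    ∃ y : ι → ℚ, ∑ i, y i • v i = b := by
  by_contra hcon
  have hb : b ∉ Submodule.span ℚ (Set.range v) := by
    intro hb
    rw [Submodule.mem_span_range_iff_exists_fun] at hb
    exact hcon hb
  -- get a dual certificate
  set W := Submodule.span ℚ (Set.range v)
  have hqb : W.mkQ b ≠ 0 := by
    simpa [Submodule.Quotient.mk_eq_zero] using hb
  obtain ⟨ψ, hψ⟩ : ∃ ψ : Module.Dual ℚ ((Fin k → ℚ) ⧸ W), ψ (W.mkQ b) ≠ 0 := by
    by_contra h
    push_neg at h
    exact hqb ((Module.forall_dual_apply_eq_zero_iff ℚ _).mp h)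
  set φ : (Fin k → ℚ) →ₗ[ℚ] ℚ := ψ.comp W.mkQ with hφdef
  have hφv : ∀ i, φ (v i) = 0 := by
    intro i
    have : v i ∈ W := Submodule.subset_span ⟨i, rfl⟩
    simp [hφdef, (Submodule.Quotient.mk_eq_zero W).mpr this]
  have hφb : φ b ≠ 0 := hψ
  -- express φ as dot product with a rational vector
  set c : Fin k → ℚ := fun j => φ (Pi.single j 1) with hc
  have hφeq : ∀ u : Fin k → ℚ, φ u = ∑ j, u j * c j := by
    intro u
    conv_lhs => rw [← Finset.univ_sum_single u]
    rw [map_sum]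
    refine Finset.sum_congr rfl fun j _ => ?_
    have : Pi.single j (u j) = u j • (Pi.single j (1 : ℚ) : Fin k → ℚ) := by
      funext r; by_cases h : r = j <;> simp [h, Pi.single_apply]
    rw [this, map_smul, smul_eq_mul, hc]
  -- evaluate the real equation against c
  have h1 : ∑ j, ((b j : ℝ)) * (c j : ℝ) = (φ b : ℝ) := by
    rw [hφeq b]; push_cast; rfl
  have h2 : ∑ j, ((b j : ℝ)) * (c j : ℝ) = 0 := by
    have := congrFun hw
    calc ∑ j, ((b j : ℝ)) * (c j : ℝ)
        = ∑ j, (∑ i, w i • (fun j => ((v i j : ℝ)))) j * (c j : ℝ) := by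
          refine Finset.sum_congr rfl fun j _ => by rw [this j]
      _ = ∑ j, (∑ i, w i * (v i j : ℝ)) * (c j : ℝ) := by
          refine Finset.sum_congr rfl fun j _ => by simp [Finset.sum_apply]
      _ = ∑ i, w i * ∑ j, (v i j : ℝ) * (c j : ℝ) := by
          simp_rw [Finset.sum_mul, Finset.mul_sum]
          rw [Finset.sum_comm]
          exact Finset.sum_congr rfl fun i _ => Finset.sum_congr rfl fun j _ => by ring
      _ = ∑ i, w i * ((φ (v i) : ℚ) : ℝ) := by
          refine Finset.sum_congr rfl fun i _ => ?_
          rw [hφeq (v i)]; push_cast; rfl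
      _ = 0 := by simp [hφv]
  rw [h1] at h2
  exact hφb (by exact_mod_cast h2)


lemma zero_not_mem_hull (n : ℕ) (P : AddSubmonoid (Fin n → ℤ))
    (hunits : ∀ x ∈ P, -x ∈ P → x = 0)
    (S₀ : Finset (Fin n → ℤ)) (hS₀P : ∀ s ∈ S₀, s ∈ P) (hS₀0 : ∀ s ∈ S₀, s ≠ 0) :
    (0 : Fin n → ℝ) ∉ convexHull ℝ ((fun v : Fin n → ℤ => fun j => ((v j : ℝ))) '' ↑S₀) := by
  intro hmem
  obtain ⟨ι, hfin, z, w, hrange, hai, hwpos, hwsum0, hwz0⟩ :=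
    eq_pos_convex_span_of_mem_convexHull hmem
  letI := hfin
  classical
  have hwsum : ∑ i : ι, w i = 1 := hwsum0
  have hwz : ∑ i : ι, w i • z i = 0 := hwz0
  clear hwsum0 hwz0
  have hg : ∀ i : ι, ∃ s ∈ S₀, (fun j => ((s j : ℝ))) = z i := by
    intro i
    obtain ⟨s, hs, hsz⟩ := hrange ⟨i, rfl⟩
    exact ⟨s, hs, hsz⟩
  choose g hgS hgz using hg
  obtain ⟨i0, -, -⟩ := Finset.exists_ne_zero_of_sum_ne_zero (hwsum ▸ one_ne_zero)
  -- set up the rational system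
  set v : ι → (Fin (n+1) → ℚ) := fun i => Fin.cons 1 (fun j => ((g i j : ℚ))) with hv
  set b : Fin (n+1) → ℚ := Fin.cons 1 0 with hbdef
  have hw : (∑ i, w i • (fun j => ((v i j : ℝ)))) = (fun j => (b j : ℝ)) := by
    funext j
    rw [Finset.sum_apply]
    simp only [Pi.smul_apply, smul_eq_mul]
    refine Fin.cases ?_ ?_ j
    · simp [hv, hbdef, hwsum]
    · intro j'
      have h2 := congrFun hwz j'
      rw [Finset.sum_apply] at h2
      simp only [Pi.smul_apply, smul_eq_mul, Pi.zero_apply] at h2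
      have : ∀ i : ι, w i * ((v i j'.succ : ℚ) : ℝ) = w i * z i j' := by
        intro i
        congr 1
        rw [← hgz i]
        simp [hv]
      rw [Finset.sum_congr rfl fun i _ => this i, h2]
      simp [hbdef]
  obtain ⟨y, hy⟩ := rat_sol_of_real_sol v b w hw
  have hysum : ∑ i, y i = 1 := by
    have := congrFun hy 0
    rw [Finset.sum_apply] at this
    simpa [hv, hbdef] using this
  have hyrel : ∀ j : Fin n, ∑ i, y i * ((g i j : ℚ)) = 0 := by
    intro j
    have := congrFun hy j.succ
    rw [Finset.sum_apply] at this
    simpa [hv, hbdef] using this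
  -- uniqueness via affine independence: y i = w i
  have hyz : ∑ i, (y i : ℝ) • z i = 0 := by
    funext j
    simp only [Finset.sum_apply, Pi.smul_apply, smul_eq_mul, Pi.zero_apply]
    have : ∀ i : ι, (y i : ℝ) * z i j = ((y i * (g i j : ℚ) : ℚ) : ℝ) := by
      intro i
      rw [← hgz i]
      push_cast
      ring
    rw [Finset.sum_congr rfl fun i _ => this i, ← Rat.cast_sum, hyrel j, Rat.cast_zero]
  have hyw : ∀ i, (y i : ℝ) = w i := by
    have h0 : ∀ e ∈ Finset.univ, ((y e : ℝ) - w e) = 0 := by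
      refine affineIndependent_iff.mp hai Finset.univ (fun i => (y i : ℝ) - w i) ?_ ?_
      · rw [Finset.sum_sub_distrib, hwsum, ← Rat.cast_sum, hysum]
        norm_num
      · simp_rw [sub_smul]
        rw [Finset.sum_sub_distrib, hyz, hwz, sub_zero]
    intro i
    have := h0 i (Finset.mem_univ i)
    linarith [this]
  have hypos : ∀ i, 0 < y i := by
    intro i
    have : (0 : ℝ) < (y i : ℝ) := by rw [hyw i]; exact hwpos i
    exact_mod_cast this
  -- clear denominators
  set N : ℕ := ∏ i, (y i).den with hN
  have hNd : ∀ i : ι, (y i).den ∣ N := fun i => Finset.dvd_prod_of_mem _ (Finset.mem_univ i)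
  have hNpos : 0 < N := Finset.prod_pos fun i _ => (y i).pos
  have hm : ∀ i : ι, ∃ m : ℕ, ((m : ℚ)) = (N : ℚ) * y i := by
    intro i
    obtain ⟨k, hk⟩ := hNd i
    refine ⟨(y i).num.toNat * k, ?_⟩
    have h1 : (((y i).num.toNat : ℚ)) = ((y i).num : ℚ) := by
      exact_mod_cast congrArg (Int.cast : ℤ → ℚ)
        (Int.toNat_of_nonneg (Rat.num_pos.mpr (hypos i)).le)
    have hd : ((y i).den : ℚ) * y i = ((y i).num : ℚ) := by
      rw [mul_comm]; exact_mod_cast Rat.mul_den_eq_num (y i)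
    calc (((y i).num.toNat * k : ℕ) : ℚ) = ((y i).num.toNat : ℚ) * k := by push_cast; ring
      _ = ((y i).num : ℚ) * k := by rw [h1]
      _ = (((y i).den : ℚ) * y i) * k := by rw [hd]
      _ = (((y i).den * k : ℕ) : ℚ) * y i := by push_cast; ring
      _ = (N : ℚ) * y i := by rw [← hk]
  choose m hmval using hm
  -- integer relation
  have hrel : ∑ i, (m i) • g i = (0 : Fin n → ℤ) := by
    funext j
    rw [Finset.sum_apply]
    have key : ∀ i : ι, (((m i • g i) j : ℤ) : ℚ) = (N : ℚ) * (y i * (g i j : ℚ)) := by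
      intro i
      have h1 : (m i • g i) j = (m i : ℤ) * g i j := by simp
      rw [h1]
      push_cast [hmval i]
      ring
    have hq : ((∑ i, (m i • g i) j : ℤ) : ℚ) = 0 := by
      push_cast [key]
      rw [← Finset.mul_sum, hyrel j, mul_zero]
    simpa using (by exact_mod_cast hq : (∑ i, (m i • g i) j : ℤ) = 0)
  -- derive contradiction from sharpness
  have hmi0 : 0 < m i0 := by
    have : (0 : ℚ) < (m i0 : ℚ) := by
      rw [hmval i0]
      exact mul_pos (by exact_mod_cast hNpos) (hypos i0)
    exact_mod_cast this
  have hxP : m i0 • g i0 ∈ P := AddSubmonoid.nsmul_mem P (hS₀P _ (hgS i0)) _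
  have hnxP : -(m i0 • g i0) ∈ P := by
    have hsplit : m i0 • g i0 + ∑ i ∈ Finset.univ.erase i0, (m i) • g i = 0 :=
      (Finset.add_sum_erase Finset.univ (fun i => m i • g i) (Finset.mem_univ i0)).trans hrel
    have heq : -(m i0 • g i0) = ∑ i ∈ Finset.univ.erase i0, (m i) • g i := by
      linear_combination (norm := abel) -hsplit
    rw [heq]
    exact AddSubmonoid.sum_mem _ fun i _ => AddSubmonoid.nsmul_mem P (hS₀P _ (hgS i)) _
  have hzero := hunits _ hxP hnxP
  have : g i0 = 0 := by
    funext j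
    have := congrFun hzero j
    simp only [Pi.smul_apply, smul_eq_mul, Pi.zero_apply] at this
    have hji : (m i0 : ℤ) * g i0 j = 0 := by simpa [mul_comm] using this
    rcases mul_eq_zero.mp hji with h | h
    · exact absurd h (by exact_mod_cast hmi0.ne')
    · simpa using h
  exact hS₀0 _ (hgS i0) this


lemma exists_strict_functional (n : ℕ) (P : AddSubmonoid (Fin n → ℤ))
    (hunits : ∀ x ∈ P, -x ∈ P → x = 0)
    (S₀ : Finset (Fin n → ℤ)) (hS₀P : ∀ s ∈ S₀, s ∈ P) (hS₀0 : ∀ s ∈ S₀, s ≠ 0) :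
    ∃ h : Fin n → ℤ, ∀ s ∈ S₀, 0 < ∑ j, h j * s j := by
  classical
  set toR : (Fin n → ℤ) → (Fin n → ℝ) := fun v => fun j => ((v j : ℝ)) with htoR
  set K : Set (Fin n → ℝ) := convexHull ℝ (toR '' ↑S₀) with hK
  have h0K : (0 : Fin n → ℝ) ∉ K := zero_not_mem_hull n P hunits S₀ hS₀P hS₀0
  have hKclosed : IsClosed K :=
    ((S₀.finite_toSet.image toR).isCompact_convexHull ℝ).isClosed
  obtain ⟨f, u, hfu, hfK⟩ :=
    geometric_hahn_banach_point_closed (convex_convexHull ℝ _) hKclosed h0K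
  have hu : (0 : ℝ) < u := by simpa using hfu
  have hfpos : ∀ s ∈ S₀, 0 < f (toR s) := by
    intro s hs
    have : toR s ∈ K := subset_convexHull ℝ _ ⟨s, hs, rfl⟩
    exact hu.trans (hfK _ this)
  -- the coordinate expression of f
  have hfexp : ∀ p : Fin n → ℝ, f p = ∑ j, p j * f (Pi.single j 1) := by
    intro p
    have hp : p = ∑ j, p j • (Pi.single j (1 : ℝ) : Fin n → ℝ) := by
      conv_lhs => rw [← Finset.univ_sum_single p]
      refine Finset.sum_congr rfl fun j _ => ?_
      funext r; by_cases h : r = j <;> simp [h, Pi.single_apply]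
    conv_lhs => rw [hp]
    rw [map_sum]
    exact Finset.sum_congr rfl fun j _ => by rw [map_smul]; rfl
  -- the open set of strictly positive functionals
  set U : Set (Fin n → ℝ) := {p | ∀ s ∈ S₀, 0 < ∑ j, p j * ((s j : ℝ))} with hU
  have hUopen : IsOpen U := by
    have : U = ⋂ s ∈ S₀, {p : Fin n → ℝ | 0 < ∑ j, p j * ((s j : ℝ))} := by
      ext p; simp [hU, Set.mem_iInter]
    rw [this]
    refine isOpen_biInter_finset fun s _ => ?_
    exact isOpen_lt continuous_const
      (continuous_finset_sum _ fun j _ => (continuous_apply j).mul continuous_const)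
  have hUne : U.Nonempty := by
    refine ⟨fun j => f (Pi.single j 1), fun s hs => ?_⟩
    have := hfpos s hs
    rw [hfexp (toR s)] at this
    simpa [htoR, mul_comm] using this
  -- pick a rational point in U
  have hdense : Dense (Set.pi Set.univ fun _ : Fin n => Set.range ((↑) : ℚ → ℝ)) :=
    dense_pi Set.univ fun i _ => Rat.denseRange_cast
  obtain ⟨p, hpD, hpU⟩ := hdense.exists_mem_open hUopen hUne
  choose q hq using fun j => hpD j (Set.mem_univ j)
  have hqpos : ∀ s ∈ S₀, 0 < ∑ j, q j * ((s j : ℚ)) := by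
    intro s hs
    have hr : (0 : ℝ) < ∑ j, p j * ((s j : ℝ)) := hpU s hs
    have : ((∑ j, q j * ((s j : ℚ)) : ℚ) : ℝ) = ∑ j, p j * ((s j : ℝ)) := by
      rw [Rat.cast_sum]
      refine Finset.sum_congr rfl fun j _ => ?_
      rw [← hq j]
      push_cast
      ring
    have : (0 : ℝ) < ((∑ j, q j * ((s j : ℚ)) : ℚ) : ℝ) := this ▸ hr
    exact_mod_cast this
  -- clear denominators
  set N : ℕ := ∏ j, (q j).den with hN
  have hNd : ∀ j, (q j).den ∣ N := fun j => Finset.dvd_prod_of_mem _ (Finset.mem_univ j)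
  have hNpos : 0 < N := Finset.prod_pos fun j _ => (q j).pos
  have hh : ∀ j, ∃ c : ℤ, ((c : ℚ)) = (N : ℚ) * q j := by
    intro j
    obtain ⟨k, hk⟩ := hNd j
    refine ⟨(q j).num * k, ?_⟩
    have hd : ((q j).den : ℚ) * q j = ((q j).num : ℚ) := by
      rw [mul_comm]; exact_mod_cast Rat.mul_den_eq_num (q j)
    calc (((q j).num * (k : ℤ) : ℤ) : ℚ) = ((q j).num : ℚ) * k := by push_cast; ring
      _ = (((q j).den : ℚ) * q j) * k := by rw [hd]
      _ = (((q j).den * k : ℕ) : ℚ) * q j := by push_cast; ring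
      _ = (N : ℚ) * q j := by rw [← hk]
  choose h hhval using hh
  refine ⟨h, fun s hs => ?_⟩
  have : ((∑ j, h j * s j : ℤ) : ℚ) = (N : ℚ) * ∑ j, q j * ((s j : ℚ)) := by
    push_cast
    rw [Finset.mul_sum]
    refine Finset.sum_congr rfl fun j _ => ?_
    rw [show ((h j : ℚ)) = (N : ℚ) * q j from hhval j]
    ring
  have hq2 : (0 : ℚ) < ((∑ j, h j * s j : ℤ) : ℚ) := by
    rw [this]
    exact mul_pos (by exact_mod_cast hNpos) (hqpos s hs)
  exact_mod_cast hq2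


/-- Let `P` be a finitely generated, integral, saturated, torsion-free
commutative monoid with trivial units, realized as an additive submonoid of its
group completion `G ≅ ℤⁿ` which it generates.  Then the dual group
`Hom(G, ℤ)` is generated, as a group, by the dual monoid
`P^* = {f : ∀ x ∈ P, 0 ≤ f x}`. -/
theorem dual_group_generated_by_dual_monoid
    (n : ℕ) (P : AddSubmonoid (Fin n → ℤ))
    (hfg : P.FG)
    (hgen : AddSubgroup.closure (P : Set (Fin n → ℤ)) = ⊤)
    (hsat : ∀ (x : Fin n → ℤ) (k : ℕ), 1 ≤ k → k • x ∈ P → x ∈ P)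
    (hunits : ∀ x ∈ P, -x ∈ P → x = 0) :
    AddSubgroup.closure
      {f : (Fin n → ℤ) →+ ℤ | ∀ x ∈ P, 0 ≤ f x} = ⊤ := by
  classical
  obtain ⟨S, hS⟩ := hfg
  have hSP : ∀ s ∈ S, s ∈ P := fun s hs => hS ▸ AddSubmonoid.subset_closure hs
  set S₀ : Finset (Fin n → ℤ) := S.filter (fun s => s ≠ 0) with hS₀
  obtain ⟨h, hh⟩ := exists_strict_functional n P hunits S₀
    (fun s hs => hSP s (Finset.mem_filter.mp hs).1)
    (fun s hs => (Finset.mem_filter.mp hs).2)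
  -- the strictly positive homomorphism
  set H : (Fin n → ℤ) →+ ℤ :=
    { toFun := fun x => ∑ j, h j * x j
      map_zero' := by simp
      map_add' := fun x y => by
        simp only [Pi.add_apply, mul_add]
        rw [Finset.sum_add_distrib] } with hHdef
  have hHS : ∀ s ∈ S, s ≠ 0 → 1 ≤ H s := by
    intro s hs hs0
    have : s ∈ S₀ := Finset.mem_filter.mpr ⟨hs, hs0⟩
    exact hh s this
  have hHP : ∀ x ∈ P, 0 ≤ H x := by
    intro x hx
    rw [← hS] at hx
    induction hx using AddSubmonoid.closure_induction with
    | mem s hsS =>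
        by_cases h0 : s = 0
        · simp [h0]
        · exact le_of_lt (hHS s hsS h0)
    | zero => simp
    | add x y hx hy ihx ihy => rw [map_add]; positivity
  -- conclude
  rw [eq_top_iff]
  rintro f -
  set D : Set ((Fin n → ℤ) →+ ℤ) := {g | ∀ x ∈ P, 0 ≤ g x} with hD
  set N : ℕ := S.sup fun s => (f s).natAbs with hN
  have hg₁ : (f + (N : ℤ) • H) ∈ D := by
    intro x hx
    rw [← hS] at hx
    induction hx using AddSubmonoid.closure_induction with
    | mem s hsS =>
        by_cases h0 : s = 0
        · simp [h0]
        · have h1 : 1 ≤ H s := hHS s hsS h0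
          have h2 : (f s).natAbs ≤ N := Finset.le_sup (f := fun s => (f s).natAbs) hsS
          have h3 : -(N : ℤ) ≤ f s := by
            have habs : |f s| ≤ (N : ℤ) := by
              rw [Int.abs_eq_natAbs]
              exact_mod_cast h2
            linarith [neg_abs_le (f s)]
          have : (N : ℤ) ≤ (N : ℤ) * H s :=
            le_mul_of_one_le_right (by positivity) h1
          simp only [AddMonoidHom.add_apply, AddMonoidHom.smul_apply, smul_eq_mul]
          linarith
    | zero => simp
    | add x y hx hy ihx ihy =>
        simp only [map_add]
        have := ihx
        have := ihy
        simp only [AddMonoidHom.add_apply, AddMonoidHom.smul_apply, smul_eq_mul] at *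
        linarith
  have hHD : H ∈ D := fun x hx => hHP x hx
  have hfeq : f = (f + (N : ℤ) • H) - (N : ℤ) • H := by abel
  rw [hfeq]
  exact sub_mem (AddSubgroup.subset_closure hg₁)
    (AddSubgroup.zsmul_mem _ (AddSubgroup.subset_closure hHD) _)
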